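/- arXiv:1211.3074 — 3 statements merged into one kernel-verified Lean document; each statement's English description precedes it below -/
import Mathlib

section
/- Let R > 0, m > 0, σ = 3^{4/3}/4, c = 1/R + (8σ/3) R^{1/3} m^{1/3}, and b = σ m^{1/3}. Define ψ(x) = c|x| − b|x|^{4/3} for x ∈ ℝⁿ with 0 < |x| ≤ R. Then ψ(x) > 0 and Δ_∞ ψ(x) ≤ −m for all x with 0 < |x| ≤ R; moreover ψ(x) > 1 when |x| = R. -/
noncomputable def infLap {n : ℕ} (u : EuclideanSpace ℝ (Fin n) → ℝ)
    (x : EuclideanSpace ℝ (Fin n)) : ℝ :=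
  (inner ℝ (fderiv ℝ (gradient u) x (gradient u x)) (gradient u x) : ℝ)

set_option maxHeartbeats 1000000

open Real InnerProductSpace

lemma radial_gradient' {n : ℕ} (c b : ℝ) (ψ : EuclideanSpace ℝ (Fin n) → ℝ)
    (hψ : ∀ x, ψ x = c * ‖x‖ - b * ‖x‖ ^ ((4:ℝ)/3))
    (y : EuclideanSpace ℝ (Fin n)) (hy : y ≠ 0) :
    HasGradientAt ψ
      ((c * (‖y‖^2) ^ (-(1:ℝ)/2) - (4*b/3) * (‖y‖^2) ^ (-(1:ℝ)/3)) • y) y := by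
  have hy0 : ‖y‖ ≠ 0 := norm_ne_zero_iff.2 hy
  have hq : (0:ℝ) < ‖y‖^2 := by positivity
  set φ : ℝ → ℝ := fun s => c * s ^ ((1:ℝ)/2) - b * s ^ ((2:ℝ)/3) with hφ
  have hψ' : ψ = φ ∘ (fun z => ‖z‖^2) := by
    funext z
    rw [hψ]
    simp only [hφ, Function.comp_apply]
    rw [← Real.rpow_natCast ‖z‖ 2, ← Real.rpow_mul (norm_nonneg z),
      ← Real.rpow_mul (norm_nonneg z)]
    norm_num
  have hd : HasDerivAt φ
      (c * ((1:ℝ)/2 * (‖y‖^2) ^ ((1:ℝ)/2 - 1)) - b * ((2:ℝ)/3 * (‖y‖^2) ^ ((2:ℝ)/3 - 1)))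
      (‖y‖^2) :=
    ((Real.hasDerivAt_rpow_const (Or.inl hq.ne')).const_mul c).sub
      ((Real.hasDerivAt_rpow_const (Or.inl hq.ne')).const_mul b)
  have hsq : HasFDerivAt (fun z : EuclideanSpace ℝ (Fin n) => ‖z‖^2) (2 • (innerSL ℝ y)) y :=
    (hasStrictFDerivAt_norm_sq y).hasFDerivAt
  have hcomp := hd.comp_hasFDerivAt y hsq
  rw [hasGradientAt_iff_hasFDerivAt, hψ']
  refine hcomp.congr_fderiv ?_
  ext z
  simp only [InnerProductSpace.toDual_apply_apply, ContinuousLinearMap.smul_apply,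
    innerSL_apply_apply, real_inner_smul_left, two_smul, ContinuousLinearMap.add_apply,
    smul_eq_mul]
  have e1 : (1:ℝ)/2 - 1 = -(1:ℝ)/2 := by norm_num
  have e2 : (2:ℝ)/3 - 1 = -(1:ℝ)/3 := by norm_num
  rw [e1, e2]
  ring

lemma stmt12_ineq (R m σ c b r K K' : ℝ) (hR : 0 < R) (hm : 0 < m)
    (hσ : σ = 3 ^ ((4:ℝ)/3) / 4)
    (hc : c = 1 / R + (8 * σ / 3) * R ^ ((1:ℝ)/3) * m ^ ((1:ℝ)/3))
    (hb : b = σ * m ^ ((1:ℝ)/3)) (hr : 0 < r) (hrR : r ≤ R)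
    (hK : K = c * (r^2) ^ (-(1:ℝ)/2) - (4*b/3) * (r^2) ^ (-(1:ℝ)/3))
    (hK' : K' = c * (-(1:ℝ)/2 * (r^2) ^ (-(1:ℝ)/2 - 1))
        - (4*b/3) * (-(1:ℝ)/3 * (r^2) ^ (-(1:ℝ)/3 - 1))) :
    2*K'*K^2*(r^2)^2 + K^3*(r^2) ≤ -m := by
  set a := r ^ ((1:ℝ)/3) with ha
  set M := m ^ ((1:ℝ)/3) with hM
  set ρ := R ^ ((1:ℝ)/3) with hρ
  have hapos : 0 < a := Real.rpow_pos_of_pos hr _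
  have hMpos : 0 < M := Real.rpow_pos_of_pos hm _
  have hρpos : 0 < ρ := Real.rpow_pos_of_pos hR _
  have haρ : a ≤ ρ := Real.rpow_le_rpow hr.le hrR (by norm_num)
  have hσpos : 0 < σ := by rw [hσ]; positivity
  have cube : ∀ t : ℝ, 0 < t → (t ^ ((1:ℝ)/3))^3 = t := by
    intro t ht
    rw [← Real.rpow_natCast (t ^ ((1:ℝ)/3)) 3, ← Real.rpow_mul ht.le]
    norm_num
  have ha3 : a^3 = r := cube r hr
  have hM3 : M^3 = m := cube m hm
  have hρ3 : ρ^3 = R := cube R hR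
  have hs3 : ((3:ℝ) ^ ((1:ℝ)/3))^3 = 3 := cube 3 (by norm_num)
  have hσ3 : σ^3 = 81/64 := by
    have h34 : (3:ℝ)^((4:ℝ)/3) = 3 * 3^((1:ℝ)/3) := by
      rw [show (4:ℝ)/3 = 1 + (1:ℝ)/3 by norm_num, Real.rpow_add (by norm_num), Real.rpow_one]
    have : σ^3 = 27 * ((3:ℝ)^((1:ℝ)/3))^3 / 64 := by rw [hσ, h34]; ring
    rw [hs3] at this; linarith
  have key : ∀ k : ℕ, (r^2 : ℝ) ^ (-(k:ℝ)/6) = (a^k)⁻¹ := by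
    intro k
    rw [← Real.rpow_natCast r 2, ← Real.rpow_mul hr.le]
    have hcast : ((2:ℕ):ℝ) * (-(k:ℝ)/6) = ((1:ℝ)/3) * (-(k:ℝ)) := by push_cast; ring
    rw [hcast, Real.rpow_mul hr.le, ← ha, Real.rpow_neg hapos.le, Real.rpow_natCast]
  have e3 : (-(1:ℝ)/2) = -((3:ℕ):ℝ)/6 := by norm_num
  have e2 : (-(1:ℝ)/3) = -((2:ℕ):ℝ)/6 := by norm_num
  have e9 : (-(1:ℝ)/2 - 1) = -((9:ℕ):ℝ)/6 := by norm_num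
  have e8 : (-(1:ℝ)/3 - 1) = -((8:ℕ):ℝ)/6 := by norm_num
  rw [e3, e2, key 3, key 2] at hK
  rw [e9, e8, key 9, key 8] at hK'
  have hr2 : r^2 = a^6 := by rw [← ha3]; ring
  rw [hr2, ← hM3]
  have hg : 4*σ*M*ρ/3 ≤ c - 4*b/3*a := by
    rw [hc, hb]
    have h1 : 0 < 1/R := by positivity
    have h2 := mul_le_mul_of_nonneg_left haρ (show (0:ℝ) ≤ 4*σ*M/3 by positivity)
    nlinarith [h2, h1]
  have hane : a ≠ 0 := hapos.ne'
  have hid : 2*K'*K^2*(a^6)^2 + K^3*a^6 = -((4*b/9) * (a^2)⁻¹ * (c - 4*b/3*a)^2) := by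
    rw [hK, hK']; field_simp; ring
  rw [hid]
  have hbnn : (0:ℝ) ≤ 4*b/9 := by rw [hb]; positivity
  suffices h : M^3 ≤ (4*b/9) * (a^2)⁻¹ * (c - 4*b/3*a)^2 by linarith
  have hbound : (4*σ*M*ρ/3)^2 ≤ (c - 4*b/3*a)^2 := pow_le_pow_left₀ (by positivity) hg 2
  have step1 : (4*b/9) * (a^2)⁻¹ * (4*σ*M*ρ/3)^2 ≤ (4*b/9) * (a^2)⁻¹ * (c-4*b/3*a)^2 :=
    mul_le_mul_of_nonneg_left hbound (mul_nonneg hbnn (by positivity))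
  have hA : (4*b/9) * (a^2)⁻¹ * (4*σ*M*ρ/3)^2 = σ^3 * (64/81) * (M^3 * (ρ^2 * (a^2)⁻¹)) := by
    rw [hb]; ring
  rw [hσ3] at hA
  have h1 : (1:ℝ) ≤ ρ^2 * (a^2)⁻¹ := by
    rw [← div_eq_mul_inv]
    exact (one_le_div (by positivity)).2 (pow_le_pow_left₀ hapos.le haρ 2)
  have hB : M^3 ≤ M^3 * (ρ^2 * (a^2)⁻¹) := le_mul_of_one_le_right (by positivity) h1
  nlinarith [step1, hA, hB]

lemma rpow_four_thirds {r : ℝ} (hr : 0 < r) : r ^ ((4:ℝ)/3) = r * r ^ ((1:ℝ)/3) := by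
  rw [show (4:ℝ)/3 = 1 + (1:ℝ)/3 by norm_num, Real.rpow_add hr, Real.rpow_one]

theorem stmt12 (n : ℕ) (hn : 2 ≤ n) (R m : ℝ) (hR : 0 < R) (hm : 0 < m)
    (σ c b : ℝ) (hσ : σ = 3 ^ ((4:ℝ)/3) / 4)
    (hc : c = 1 / R + (8 * σ / 3) * R ^ ((1:ℝ)/3) * m ^ ((1:ℝ)/3))
    (hb : b = σ * m ^ ((1:ℝ)/3))
    (ψ : EuclideanSpace ℝ (Fin n) → ℝ)
    (hψ : ∀ x, ψ x = c * ‖x‖ - b * ‖x‖ ^ ((4:ℝ)/3)) :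
    (∀ x : EuclideanSpace ℝ (Fin n), 0 < ‖x‖ → ‖x‖ ≤ R →
      0 < ψ x ∧ infLap ψ x ≤ -m) ∧
    (∀ x : EuclideanSpace ℝ (Fin n), ‖x‖ = R → 1 < ψ x) := by
  have hσpos : 0 < σ := by rw [hσ]; positivity
  have hMpos : 0 < m ^ ((1:ℝ)/3) := Real.rpow_pos_of_pos hm _
  have hρpos : 0 < R ^ ((1:ℝ)/3) := Real.rpow_pos_of_pos hR _
  constructor
  · intro x hx hxR
    have hx0 : x ≠ 0 := fun h => by simp [h] at hx
    constructor
    · -- positivity of ψ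
      rw [hψ x, rpow_four_thirds hx]
      have haρ : ‖x‖ ^ ((1:ℝ)/3) ≤ R ^ ((1:ℝ)/3) :=
        Real.rpow_le_rpow hx.le hxR (by norm_num)
      have hpos : 0 < c - b * ‖x‖ ^ ((1:ℝ)/3) := by
        rw [hc, hb]
        have h1 : 0 < 1/R := by positivity
        have h2 := mul_le_mul_of_nonneg_left haρ
          (show (0:ℝ) ≤ σ * m ^ ((1:ℝ)/3) by positivity)
        have h3 : 0 < σ * m ^ ((1:ℝ)/3) * R ^ ((1:ℝ)/3) := by positivity
        nlinarith [h1, h2, h3]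
      nlinarith [mul_pos hx hpos]
    · -- infinity Laplacian
      set q : ℝ := ‖x‖^2 with hqdef
      have hq : (0:ℝ) < q := by positivity
      set K : ℝ := c * q ^ (-(1:ℝ)/2) - (4*b/3) * q ^ (-(1:ℝ)/3) with hKdef
      set dK : ℝ := c * (-(1:ℝ)/2 * q ^ (-(1:ℝ)/2 - 1))
          - (4*b/3) * (-(1:ℝ)/3 * q ^ (-(1:ℝ)/3 - 1)) with hdKdef
      -- derivative of the scalar factor
      set φ2 : ℝ → ℝ := fun s => c * s ^ (-(1:ℝ)/2) - (4*b/3) * s ^ (-(1:ℝ)/3) with hφ2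
      have hd2 : HasDerivAt φ2 dK q :=
        ((Real.hasDerivAt_rpow_const (Or.inl hq.ne')).const_mul c).sub
          ((Real.hasDerivAt_rpow_const (Or.inl hq.ne')).const_mul (4*b/3))
      have hsq : HasFDerivAt (fun z : EuclideanSpace ℝ (Fin n) => ‖z‖^2)
          (2 • (innerSL ℝ x)) x := (hasStrictFDerivAt_norm_sq x).hasFDerivAt
      have hscal : HasFDerivAt
          (fun y : EuclideanSpace ℝ (Fin n) =>
            c * (‖y‖^2) ^ (-(1:ℝ)/2) - (4*b/3) * (‖y‖^2) ^ (-(1:ℝ)/3))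
          (dK • (2 • (innerSL ℝ x))) x := by have := hd2.comp_hasFDerivAt x hsq; exact this
      set D : EuclideanSpace ℝ (Fin n) →L[ℝ] EuclideanSpace ℝ (Fin n) :=
        K • ContinuousLinearMap.id ℝ (EuclideanSpace ℝ (Fin n))
          + (dK • (2 • (innerSL ℝ x))).smulRight x with hDdef
      have hG : HasFDerivAt
          (fun y : EuclideanSpace ℝ (Fin n) =>
            (c * (‖y‖^2) ^ (-(1:ℝ)/2) - (4*b/3) * (‖y‖^2) ^ (-(1:ℝ)/3)) • y) D x :=
        hscal.smul (hasFDerivAt_id x)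
      have hgradeq : gradient ψ =ᶠ[nhds x] (fun y : EuclideanSpace ℝ (Fin n) =>
          (c * (‖y‖^2) ^ (-(1:ℝ)/2) - (4*b/3) * (‖y‖^2) ^ (-(1:ℝ)/3)) • y) := by
        filter_upwards [isOpen_compl_singleton.mem_nhds
          (show x ∈ ({0}ᶜ : Set (EuclideanSpace ℝ (Fin n))) from hx0)] with y hy
        exact (radial_gradient' c b ψ hψ y hy).gradient
      have hfd : fderiv ℝ (gradient ψ) x = D := by
        rw [hgradeq.fderiv_eq, hG.fderiv]
      have hgx : gradient ψ x = K • x := (radial_gradient' c b ψ hψ x hx0).gradient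
      have hval : infLap ψ x = 2*dK*K^2*q^2 + K^3*q := by
        simp only [infLap, hfd, hgx, hDdef, ContinuousLinearMap.add_apply,
          ContinuousLinearMap.smul_apply, ContinuousLinearMap.id_apply,
          ContinuousLinearMap.smulRight_apply, innerSL_apply_apply, inner_add_left,
          real_inner_smul_left, real_inner_smul_right, real_inner_self_eq_norm_sq,
          smul_eq_mul, two_smul, inner_add_right, ← hqdef]
        ring
      rw [hval]
      exact stmt12_ineq R m σ c b ‖x‖ K dK hR hm hσ hc hb hx hxR hKdef hdKdef
  · intro x hxR
    have hx : 0 < ‖x‖ := hxR ▸ hR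
    rw [hψ x, rpow_four_thirds hx, hxR, hc, hb]
    have h5 : 0 < (5*σ/3) * m ^ ((1:ℝ)/3) * R ^ ((1:ℝ)/3) * R := by positivity
    have hRne : R ≠ 0 := hR.ne'
    have : (1/R + 8*σ/3 * R ^ ((1:ℝ)/3) * m ^ ((1:ℝ)/3)) * R
        - σ * m ^ ((1:ℝ)/3) * (R * R ^ ((1:ℝ)/3))
        = 1 + (5*σ/3) * m ^ ((1:ℝ)/3) * R ^ ((1:ℝ)/3) * R := by
      field_simp
      ring
    rw [this]
    linarith
end

section
/- Let L ≠ 0 and b ∈ ℝ be such that b + 3L|x| > 0 for all x in the ball B_R(0). Define ψ(x) = 1 + (1/(4L))[(b + 3L|x|)^{4/3} − b^{4/3}]. Then Δ_∞ ψ(x) = L for every x with 0 < |x| < R. -/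
section aux
variable {F : Type*} [NormedAddCommGroup F] [InnerProductSpace ℝ F]

lemma hasFDerivAt_norm_aux (x : F) (hx : x ≠ 0) :
    HasFDerivAt (fun y : F => ‖y‖) (‖x‖⁻¹ • innerSL ℝ x) x := by
  have hr : (0:ℝ) < ‖x‖ := norm_pos_iff.mpr hx
  have h1 : HasFDerivAt (fun y : F => ‖y‖^2) ((2:ℕ) • innerSL ℝ x) x :=
    (hasStrictFDerivAt_norm_sq x).hasFDerivAt
  have h2 : HasDerivAt Real.sqrt (1 / (2 * Real.sqrt (‖x‖^2))) (‖x‖^2) :=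
    Real.hasDerivAt_sqrt (by positivity)
  have h3 := h2.comp_hasFDerivAt x h1
  have heq : (fun y : F => Real.sqrt (‖y‖^2)) = fun y : F => ‖y‖ := by
    funext y; rw [Real.sqrt_sq (norm_nonneg y)]
  rw [show Real.sqrt ∘ (fun y : F => ‖y‖^2) = fun y : F => ‖y‖ from heq] at h3
  convert h3 using 1
  · rfl
  · rfl
  rw [Real.sqrt_sq hr.le]
  ext v
  simp
  field_simp

variable [CompleteSpace F]

lemma hasGradientAt_aux (L b : ℝ) (hL : L ≠ 0) (y : F) (hy : y ≠ 0)
    (hA : 0 < b + 3*L*‖y‖) :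
    HasGradientAt (fun z : F => 1 + (1/(4*L)) * ((b+3*L*‖z‖) ^ ((4:ℝ)/3) - b ^ ((4:ℝ)/3)))
      (((b+3*L*‖y‖) ^ ((1:ℝ)/3) * ‖y‖⁻¹) • y) y := by
  have hr : (0:ℝ) < ‖y‖ := norm_pos_iff.mpr hy
  set s := ‖y‖ with hs
  set A := b + 3*L*s with hAdef
  have haff : HasDerivAt (fun r : ℝ => b + 3*L*r) (3*L) s := by
    simpa using ((hasDerivAt_id s).const_mul (3*L)).const_add b
  have hrpow : HasDerivAt (fun t : ℝ => t ^ ((4:ℝ)/3)) ((4/3) * A ^ ((4:ℝ)/3 - 1)) A :=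
    Real.hasDerivAt_rpow_const (Or.inl hA.ne')
  have hφ : HasDerivAt (fun r : ℝ => 1 + (1/(4*L)) * ((b+3*L*r) ^ ((4:ℝ)/3) - b ^ ((4:ℝ)/3)))
      (A ^ ((1:ℝ)/3)) s := by
    have := (((hrpow.comp s haff).sub_const (b ^ ((4:ℝ)/3))).const_mul (1/(4*L))).const_add 1
    convert this using 1
    · rfl
    · rfl
    · rfl
    rw [show (4:ℝ)/3 - 1 = 1/3 by norm_num]
    field_simp
  have hnorm := hasFDerivAt_norm_aux y hy
  have hψ' := hφ.comp_hasFDerivAt y hnorm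
  rw [hasGradientAt_iff_hasFDerivAt]
  convert hψ' using 1
  · rfl
  · rfl
  ext v
  simp [InnerProductSpace.toDual_apply_apply, real_inner_smul_left]
  ring
end aux

theorem stmt13 (n : ℕ) (hn : 2 ≤ n) (R L b : ℝ) (hR : 0 < R) (hL : L ≠ 0)
    (hb : ∀ x : EuclideanSpace ℝ (Fin n), ‖x‖ < R → 0 < b + 3 * L * ‖x‖)
    (ψ : EuclideanSpace ℝ (Fin n) → ℝ)
    (hψ : ∀ x, ψ x = 1 + (1 / (4 * L)) *
      ((b + 3 * L * ‖x‖) ^ ((4:ℝ)/3) - b ^ ((4:ℝ)/3))) :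
    ∀ x : EuclideanSpace ℝ (Fin n), 0 < ‖x‖ → ‖x‖ < R → infLap ψ x = L := by
  intro x hx0 hxR
  have hψfun : ψ = fun z : EuclideanSpace ℝ (Fin n) =>
      1 + (1/(4*L)) * ((b+3*L*‖z‖) ^ ((4:ℝ)/3) - b ^ ((4:ℝ)/3)) := by
    funext z; rw [hψ z]
  set G : EuclideanSpace ℝ (Fin n) → EuclideanSpace ℝ (Fin n) :=
    fun y => ((b+3*L*‖y‖) ^ ((1:ℝ)/3) * ‖y‖⁻¹) • y with hG
  have key : ∀ y : EuclideanSpace ℝ (Fin n), y ≠ 0 → 0 < b + 3*L*‖y‖ →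
      HasGradientAt ψ (G y) y := by
    intro y hy hA
    rw [hψfun]
    exact hasGradientAt_aux L b hL y hy hA
  have hxne : x ≠ 0 := by simpa [norm_pos_iff] using hx0
  have hAx : 0 < b + 3*L*‖x‖ := by simpa using hb x hxR
  have hS : IsOpen {y : EuclideanSpace ℝ (Fin n) | y ≠ 0 ∧ 0 < b + 3*L*‖y‖} := by
    apply IsOpen.inter isOpen_ne
    exact isOpen_lt continuous_const (continuous_const.add (continuous_const.mul continuous_norm))
  have hev : gradient ψ =ᶠ[nhds x] G := by
    filter_upwards [hS.mem_nhds ⟨hxne, hAx⟩] with y hy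
    exact (key y hy.1 hy.2).gradient
  have hr : (0:ℝ) < ‖x‖ := hx0
  set r := ‖x‖ with hrdef
  set A := b + 3*L*r with hAdef
  have haff : HasDerivAt (fun t : ℝ => b + 3*L*t) (3*L) r := by
    simpa using ((hasDerivAt_id r).const_mul (3*L)).const_add b
  have h1 : HasDerivAt (fun t : ℝ => (b+3*L*t) ^ ((1:ℝ)/3))
      ((1/3) * A ^ ((1:ℝ)/3 - 1) * (3*L)) r := by
    have := (Real.hasDerivAt_rpow_const (p := (1:ℝ)/3) (Or.inl hAx.ne')).comp r haff
    convert this using 1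
    · rfl
    · rfl
    · rfl
  have h2 : HasDerivAt (fun t : ℝ => t⁻¹) (-(r^2)⁻¹) r := by
    simpa using hasDerivAt_inv hr.ne'
  have hmul := h1.mul h2
  set md : ℝ := (1/3) * A ^ ((1:ℝ)/3 - 1) * (3*L) * r⁻¹ + A ^ ((1:ℝ)/3) * -(r^2)⁻¹ with hmd
  have hnorm := hasFDerivAt_norm_aux x hxne
  have hm : HasFDerivAt (fun y : EuclideanSpace ℝ (Fin n) => (b+3*L*‖y‖) ^ ((1:ℝ)/3) * ‖y‖⁻¹)
      (md • (r⁻¹ • innerSL ℝ x)) x := by exact hmul.comp_hasFDerivAt x hnorm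
  have hGd := hm.smul (hasFDerivAt_id x)
  have hfd : HasFDerivAt (gradient ψ)
      ((A ^ ((1:ℝ)/3) * r⁻¹) • ContinuousLinearMap.id ℝ (EuclideanSpace ℝ (Fin n))
        + (md • (r⁻¹ • innerSL ℝ x)).smulRight x) x :=
    HasFDerivAt.congr_of_eventuallyEq hGd hev
  have hgradx : gradient ψ x = (A ^ ((1:ℝ)/3) * r⁻¹) • x := (key x hxne hAx).gradient
  rw [infLap, hfd.fderiv, hgradx]
  simp only [ContinuousLinearMap.add_apply, ContinuousLinearMap.coe_smul',
    ContinuousLinearMap.coe_id, Pi.smul_apply, id_eq, ContinuousLinearMap.smulRight_apply,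
    ContinuousLinearMap.smul_apply, innerSL_apply_apply, smul_eq_mul]
  rw [inner_add_left]
  simp only [real_inner_smul_left, real_inner_smul_right, real_inner_self_eq_norm_sq, ← hrdef]
  have hrpow1 : A ^ ((1:ℝ)/3) * A ^ ((1:ℝ)/3) * A ^ ((1:ℝ)/3 - 1) = 1 := by
    rw [← Real.rpow_add hAx, ← Real.rpow_add hAx]
    norm_num
  have hrpow2 : A ^ ((1:ℝ)/3) * A ^ ((1:ℝ)/3) * A ^ ((1:ℝ)/3) = A := by
    rw [← Real.rpow_add hAx, ← Real.rpow_add hAx]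
    norm_num
  rw [hmd]
  simp only [ContinuousLinearMap.id_apply, real_inner_smul_left, real_inner_self_eq_norm_sq,
    ← hrdef]
  rw [show (1:ℝ)/3 - 1 = 1/3 - 1 from rfl, Real.rpow_sub hAx, Real.rpow_one]
  set u := A ^ ((1:ℝ)/3) with hudef
  have hu3 : u * u * u = A := hrpow2
  have hA0 : A ≠ 0 := hAx.ne'
  have hr0 : r ≠ 0 := hr.ne'
  field_simp
  linear_combination (L*r) * hu3
end

section
/- Let k > 0, λ > 0, m > 0, and let F(t) = ∫_t^1 (1−s⁴)^{−1/4} ds for t ∈ [0,1]. Suppose u : (0,R) → (0,m) is a function satisfying F(u(r)/m) = (λk)^{1/4} r for all r ∈ (0,R), where (λk)^{1/4} R ≤ F(0). Then u is twice differentiable on (0,R) and satisfies u'(r)² u''(r) + λ k u(r)³ = 0, with u strictly decreasing. -/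
open MeasureTheory intervalIntegral Set

noncomputable def F (t : ℝ) : ℝ := ∫ s in t..1, (1 - s ^ 4) ^ (-(1:ℝ)/4)

lemma fmeas : Measurable (fun s : ℝ => (1 - s ^ 4) ^ (-(1:ℝ)/4)) := by fun_prop

lemma Fint {t : ℝ} (ht : 0 ≤ t) (ht1 : t ≤ 1) :
    IntervalIntegrable (fun s : ℝ => (1 - s ^ 4) ^ (-(1:ℝ)/4)) volume t 1 := by
  have h1 : IntervalIntegrable (fun x : ℝ => x ^ (-(1:ℝ)/4)) volume 0 (1 - t) :=
    intervalIntegrable_rpow' (by norm_num)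
  have h2 := (h1.comp_sub_left 1).symm
  simp only [sub_zero, sub_sub_cancel] at h2
  refine h2.mono_fun fmeas.aestronglyMeasurable ?_
  rw [uIoc_of_le ht1]
  filter_upwards [ae_restrict_mem measurableSet_Ioc] with x hx
  have hx0 : 0 < x := lt_of_le_of_lt ht hx.1
  have h3 : x ^ 3 ≤ 1 := pow_le_one₀ hx0.le hx.2
  have hx4 : x ^ 4 ≤ x := by nlinarith
  have h14 : (0:ℝ) ≤ 1 - x ^ 4 := by linarith [hx4, hx.2]
  rcases eq_or_lt_of_le hx.2 with h1 | h1
  · subst h1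
    norm_num [Real.zero_rpow (by norm_num : -(1:ℝ)/4 ≠ 0)]
  · have hb : (0:ℝ) < 1 - x := by linarith
    have hle : 1 - x ≤ 1 - x ^ 4 := by linarith
    have := Real.rpow_le_rpow_of_nonpos hb hle (by norm_num : -(1:ℝ)/4 ≤ 0)
    rw [Real.norm_eq_abs, Real.norm_eq_abs, abs_of_nonneg (Real.rpow_nonneg h14 _),
      abs_of_nonneg (Real.rpow_nonneg hb.le _)]
    exact this

lemma F_hasDerivAt {t : ℝ} (ht : t ∈ Set.Ioo (0:ℝ) 1) :
    HasDerivAt F (-((1 - t ^ 4) ^ (-(1:ℝ)/4))) t := by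
  have hp : (0:ℝ) < 1 - t ^ 4 := by
    have := pow_lt_one₀ ht.1.le ht.2 (by norm_num : (4:ℕ) ≠ 0); linarith
  exact integral_hasDerivAt_left (Fint ht.1.le ht.2.le)
    fmeas.stronglyMeasurable.stronglyMeasurableAtFilter
    (ContinuousAt.rpow_const (by fun_prop) (Or.inl hp.ne'))

lemma F_anti : StrictAntiOn F (Set.Ioo (0:ℝ) 1) := by
  apply strictAntiOn_of_deriv_neg (convex_Ioo 0 1)
  · exact fun x hx => (F_hasDerivAt hx).continuousAt.continuousWithinAt
  · intro x hx
    rw [interior_Ioo] at hx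
    rw [(F_hasDerivAt hx).deriv]
    have hp : (0:ℝ) < 1 - x ^ 4 := by
      have := pow_lt_one₀ hx.1.le hx.2 (by norm_num : (4:ℕ) ≠ 0); linarith
    have := Real.rpow_pos_of_pos hp (-(1:ℝ)/4)
    linarith

theorem stmt15 (k lam m R : ℝ) (hk : 0 < k) (hlam : 0 < lam) (hm : 0 < m)
    (hR : 0 < R) (hFR : (lam * k) ^ ((1:ℝ)/4) * R ≤ F 0)
    (u : ℝ → ℝ)
    (hrange : ∀ r ∈ Set.Ioo (0:ℝ) R, u r ∈ Set.Ioo 0 m)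
    (himp : ∀ r ∈ Set.Ioo (0:ℝ) R, F (u r / m) = (lam * k) ^ ((1:ℝ)/4) * r) :
    (∀ r ∈ Set.Ioo (0:ℝ) R,
      DifferentiableAt ℝ u r ∧ DifferentiableAt ℝ (deriv u) r ∧
      (deriv u r) ^ 2 * deriv (deriv u) r + lam * k * u r ^ 3 = 0) ∧
    StrictAntiOn u (Set.Ioo 0 R) := by
  set c : ℝ := (lam * k) ^ ((1:ℝ)/4) with hc_def
  have hlk : 0 < lam * k := mul_pos hlam hk
  have hc : 0 < c := Real.rpow_pos_of_pos hlk _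
  have hc4 : c ^ (4:ℕ) = lam * k := by
    rw [hc_def, ← Real.rpow_natCast (_ ^ _) 4, ← Real.rpow_mul hlk.le]
    norm_num
  have hv : ∀ r ∈ Set.Ioo (0:ℝ) R, u r / m ∈ Set.Ioo (0:ℝ) 1 := by
    intro r hr
    obtain ⟨h1, h2⟩ := hrange r hr
    exact ⟨div_pos h1 hm, (div_lt_one hm).2 h2⟩
  -- strict antitonicity
  have hanti : StrictAntiOn u (Set.Ioo 0 R) := by
    intro r₁ h₁ r₂ h₂ h12
    by_contra hcon
    push_neg at hcon
    have hle : u r₁ / m ≤ u r₂ / m := by gcongr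
    have hFle : F (u r₂ / m) ≤ F (u r₁ / m) := F_anti.antitoneOn (hv r₁ h₁) (hv r₂ h₂) hle
    rw [himp r₁ h₁, himp r₂ h₂] at hFle
    have hlt : c * r₁ < c * r₂ := mul_lt_mul_of_pos_left h12 hc
    linarith
  -- continuity of v = u / m at each point of (0, R)
  have hcont : ∀ r₀ ∈ Set.Ioo (0:ℝ) R, ContinuousAt (fun r => u r / m) r₀ := by
    intro r₀ hr₀
    have ht₀ : u r₀ / m ∈ Set.Ioo (0:ℝ) 1 := hv r₀ hr₀
    set t₀ := u r₀ / m with ht₀_def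
    rw [Metric.continuousAt_iff]
    intro ε hε
    set ε' := min (ε/2) (min (t₀/2) ((1-t₀)/2)) with hε'_def
    have hε'1 : ε' ≤ ε/2 := min_le_left _ _
    have hε't : ε' ≤ t₀/2 := le_trans (min_le_right _ _) (min_le_left _ _)
    have hε't' : ε' ≤ (1-t₀)/2 := le_trans (min_le_right _ _) (min_le_right _ _)
    have hε' : 0 < ε' :=
      lt_min (by linarith) (lt_min (by linarith [ht₀.1]) (by linarith [ht₀.2]))
    have ha : t₀ - ε' ∈ Set.Ioo (0:ℝ) 1 := ⟨by linarith [ht₀.1], by linarith [ht₀.2]⟩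
    have hb : t₀ + ε' ∈ Set.Ioo (0:ℝ) 1 := ⟨by linarith [ht₀.1], by linarith [ht₀.2]⟩
    have hFa : F t₀ < F (t₀ - ε') := F_anti ha ht₀ (by linarith)
    have hFb : F (t₀ + ε') < F t₀ := F_anti ht₀ hb (by linarith)
    set δ := min ((F (t₀ - ε') - F t₀)/c) (min ((F t₀ - F (t₀ + ε'))/c) (min r₀ (R - r₀)))
      with hδ_def
    have hδ1 : δ ≤ (F (t₀ - ε') - F t₀)/c := min_le_left _ _
    have hδ2 : δ ≤ (F t₀ - F (t₀ + ε'))/c := le_trans (min_le_right _ _) (min_le_left _ _)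
    have hδ3 : δ ≤ r₀ := le_trans (min_le_right _ _) (le_trans (min_le_right _ _) (min_le_left _ _))
    have hδ4 : δ ≤ R - r₀ :=
      le_trans (min_le_right _ _) (le_trans (min_le_right _ _) (min_le_right _ _))
    have hδpos : 0 < δ :=
      lt_min (div_pos (by linarith) hc)
        (lt_min (div_pos (by linarith) hc) (lt_min hr₀.1 (by linarith [hr₀.2])))
    refine ⟨δ, hδpos, ?_⟩
    intro x hx
    rw [Real.dist_eq] at hx
    obtain ⟨hx1, hx2⟩ := abs_lt.1 hx
    have hxR : x ∈ Set.Ioo (0:ℝ) R := ⟨by linarith, by linarith⟩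
    have ht : u x / m ∈ Set.Ioo (0:ℝ) 1 := hv x hxR
    set t := u x / m with ht_def
    have hFt : F t = c * x := himp x hxR
    have hFt₀ : F t₀ = c * r₀ := himp r₀ hr₀
    have hcδa : c * δ ≤ F (t₀ - ε') - F t₀ := by
      calc c * δ ≤ c * ((F (t₀ - ε') - F t₀)/c) := mul_le_mul_of_nonneg_left hδ1 hc.le
      _ = F (t₀ - ε') - F t₀ := mul_div_cancel₀ _ hc.ne'
    have hcδb : c * δ ≤ F t₀ - F (t₀ + ε') := by
      calc c * δ ≤ c * ((F t₀ - F (t₀ + ε'))/c) := mul_le_mul_of_nonneg_left hδ2 hc.le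
      _ = F t₀ - F (t₀ + ε') := mul_div_cancel₀ _ hc.ne'
    have h1 : c * (x - r₀) < c * δ := mul_lt_mul_of_pos_left hx2 hc
    have h2 : c * (r₀ - x) < c * δ := mul_lt_mul_of_pos_left (by linarith) hc
    have hexp1 : c * x - c * r₀ = c * (x - r₀) := by ring
    have hexp2 : c * r₀ - c * x = c * (r₀ - x) := by ring
    have hta : F t < F (t₀ - ε') := by rw [hFt]; linarith
    have htb : F (t₀ + ε') < F t := by rw [hFt]; linarith
    have hat : t₀ - ε' < t := by
      by_contra hcon
      push_neg at hcon
      exact absurd (F_anti.antitoneOn ht ha hcon) (by linarith)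
    have htb' : t < t₀ + ε' := by
      by_contra hcon
      push_neg at hcon
      exact absurd (F_anti.antitoneOn hb ht hcon) (by linarith)
    rw [Real.dist_eq]
    exact abs_lt.2 ⟨by linarith, by linarith⟩
  -- pointwise derivative of u
  have key : ∀ r ∈ Set.Ioo (0:ℝ) R,
      HasDerivAt u (-(m * c) * (1 - (u r / m) ^ 4) ^ ((1:ℝ)/4)) r := by
    intro r₀ hr₀
    have ht₀ : u r₀ / m ∈ Set.Ioo (0:ℝ) 1 := hv r₀ hr₀
    have hp : (0:ℝ) < 1 - (u r₀ / m) ^ 4 := by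
      have := pow_lt_one₀ ht₀.1.le ht₀.2 (by norm_num : (4:ℕ) ≠ 0); linarith
    have hq : (0:ℝ) < (1 - (u r₀ / m) ^ 4) ^ ((1:ℝ)/4) := Real.rpow_pos_of_pos hp _
    have hF' : HasDerivAt (fun t => F t / c) (-((1 - (u r₀ / m) ^ 4) ^ (-(1:ℝ)/4)) / c)
        ((fun r => u r / m) r₀) := (F_hasDerivAt ht₀).div_const c
    have hne : -((1 - (u r₀ / m) ^ 4) ^ (-(1:ℝ)/4)) / c ≠ 0 := by
      have := Real.rpow_pos_of_pos hp (-(1:ℝ)/4)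
      have : -((1 - (u r₀ / m) ^ 4) ^ (-(1:ℝ)/4)) / c < 0 := by
        apply div_neg_of_neg_of_pos (by linarith) hc
      linarith
    have hfg : ∀ᶠ x in nhds r₀, (fun t => F t / c) ((fun r => u r / m) x) = x := by
      filter_upwards [isOpen_Ioo.mem_nhds hr₀] with x hx
      show F (u x / m) / c = x
      rw [himp x hx, mul_div_cancel_left₀ _ hc.ne']
    have hv' := HasDerivAt.of_local_left_inverse (hcont r₀ hr₀) hF' hne hfg
    have hval : (-((1 - (u r₀ / m) ^ 4) ^ (-(1:ℝ)/4)) / c)⁻¹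
        = -c * (1 - (u r₀ / m) ^ 4) ^ ((1:ℝ)/4) := by
      have hrw : (1 - (u r₀ / m) ^ 4) ^ (-(1:ℝ)/4)
          = ((1 - (u r₀ / m) ^ 4) ^ ((1:ℝ)/4))⁻¹ := by
        rw [neg_div, Real.rpow_neg hp.le]
      rw [hrw]
      field_simp
    rw [hval] at hv'
    have huv : u = fun r => m * (u r / m) := by
      funext r
      field_simp
    have := hv'.const_mul m
    rw [← huv] at this
    exact this.congr_deriv (by ring)
  refine ⟨?_, hanti⟩
  intro r₀ hr₀
  have ht₀ : u r₀ / m ∈ Set.Ioo (0:ℝ) 1 := hv r₀ hr₀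
  have hp : (0:ℝ) < 1 - (u r₀ / m) ^ 4 := by
    have := pow_lt_one₀ ht₀.1.le ht₀.2 (by norm_num : (4:ℕ) ≠ 0); linarith
  have hu' := key r₀ hr₀
  -- second derivative
  have hw : HasDerivAt (fun r => 1 - (u r / m) ^ 4)
      (-((4:ℕ) * (u r₀ / m) ^ (4-1) * ((-(m * c) * (1 - (u r₀ / m) ^ 4) ^ ((1:ℝ)/4)) / m))) r₀ :=
    ((hu'.div_const m).pow 4).const_sub 1
  have hG : HasDerivAt (fun r => -(m * c) * (1 - (u r / m) ^ 4) ^ ((1:ℝ)/4))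
      (-(m * c) * (-((4:ℕ) * (u r₀ / m) ^ (4-1) * ((-(m * c) * (1 - (u r₀ / m) ^ 4) ^ ((1:ℝ)/4)) / m))
        * ((1:ℝ)/4) * (1 - (u r₀ / m) ^ 4) ^ ((1:ℝ)/4 - 1))) r₀ :=
    (hw.rpow_const (Or.inl hp.ne')).const_mul (-(m * c))
  have hEq : deriv u =ᶠ[nhds r₀] fun r => -(m * c) * (1 - (u r / m) ^ 4) ^ ((1:ℝ)/4) := by
    filter_upwards [isOpen_Ioo.mem_nhds hr₀] with x hx
    exact (key x hx).deriv
  have hdu2 : HasDerivAt (deriv u)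
      (-(m * c) * (-((4:ℕ) * (u r₀ / m) ^ (4-1) * ((-(m * c) * (1 - (u r₀ / m) ^ 4) ^ ((1:ℝ)/4)) / m))
        * ((1:ℝ)/4) * (1 - (u r₀ / m) ^ 4) ^ ((1:ℝ)/4 - 1))) r₀ :=
    hG.congr_of_eventuallyEq hEq
  refine ⟨hu'.differentiableAt, hdu2.differentiableAt, ?_⟩
  rw [hu'.deriv, hdu2.deriv]
  -- algebraic verification
  have hu₀ : u r₀ = m * (u r₀ / m) := by field_simp
  set t₀ := u r₀ / m
  set q := (1 - t₀ ^ 4) ^ ((1:ℝ)/4) with hq_def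
  set P := (1 - t₀ ^ 4) ^ ((1:ℝ)/4 - 1) with hP_def
  have hqP : q ^ (3:ℕ) * P = 1 := by
    rw [hq_def, hP_def, ← Real.rpow_natCast ((1 - t₀ ^ 4) ^ ((1:ℝ)/4)) 3,
      ← Real.rpow_mul hp.le, ← Real.rpow_add hp]
    norm_num
  have hmne : m ≠ 0 := hm.ne'
  have hDval : -(m * c) * (-((4:ℕ) * t₀ ^ (4 - 1) * (-(m * c) * q / m)) * ((1:ℝ)/4) * P)
      = -(m * c ^ 2 * t₀ ^ 3 * q * P) := by
    push_cast
    field_simp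
  rw [hDval, hu₀, ← hc4]
  linear_combination (-(m ^ 3 * c ^ 4 * t₀ ^ 3)) * hqP
end
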